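/- Let F ≥ 2 and m ≥ 1 be integers. Then the maximum K for which a (K, F, F−2, mF+2)-PDA exists equals m·F·(F−1)/2 + ⌊F/2⌋; i.e., K_{(F,2,mF+2)} = m·K_{(F,2,F)} + K_{(F,2,2)}. -/

import Mathlib

/-- A `(K, F, Z, S)` placement delivery array: an `F × K` array over
`{0, …, S-1} ∪ {*}` (with `none` playing the role of `*`) such that
(1) each integer occurs at most once in each row and in each column,
(2) whenever two distinct cells `(a, b)` and `(c, d)` contain the same
integer, the opposite corners `(a, d)` and `(c, b)` contain `*`, and
(3) the symbol `*` occurs exactly `Z` times in each column. -/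
def IsPDA (K F Z S : ℕ) (P : Fin F → Fin K → Option (Fin S)) : Prop :=
  (∀ (i : Fin F) (j j' : Fin K) (s : Fin S), P i j = some s → P i j' = some s → j = j') ∧
  (∀ (i i' : Fin F) (j : Fin K) (s : Fin S), P i j = some s → P i' j = some s → i = i') ∧
  (∀ (a c : Fin F) (b d : Fin K) (s : Fin S),
      (a, b) ≠ (c, d) → P a b = some s → P c d = some s →
      P a d = none ∧ P c b = none) ∧
  (∀ j : Fin K, (Finset.univ.filter (fun i => P i j = none)).card = Z)

/-- There exists a `(K, F, Z, S)` placement delivery array. -/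
def PDAExists (K F Z S : ℕ) : Prop :=
  ∃ P : Fin F → Fin K → Option (Fin S), IsPDA K F Z S P


namespace PDAProof
open Finset


variable {F K S : ℕ}

def Fd (P : Fin F → Fin K → Option (Fin S)) (j : Fin K) : Finset (Fin F) :=
  univ.filter (fun i => P i j ≠ none)
def occ (P : Fin F → Fin K → Option (Fin S)) (s : Fin S) : Finset (Fin F × Fin K) :=
  univ.filter (fun p => P p.1 p.2 = some s)
def deg (P : Fin F → Fin K → Option (Fin S)) (s : Fin S) : ℕ := (occ P s).card
def Arows (P : Fin F → Fin K → Option (Fin S)) (s : Fin S) : Finset (Fin F) :=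
  (occ P s).image Prod.fst
def colsOf (P : Fin F → Fin K → Option (Fin S)) (s : Fin S) : Finset (Fin K) :=
  (occ P s).image Prod.snd
noncomputable def pr (P : Fin F → Fin K → Option (Fin S)) (j : Fin K) (i : Fin F) : Fin F :=
  if h : ((Fd P j).erase i).Nonempty then h.choose else i
@[simp] lemma mem_Fd {P : Fin F → Fin K → Option (Fin S)} {j : Fin K} {i : Fin F} :
    i ∈ Fd P j ↔ P i j ≠ none := by simp [Fd]
@[simp] lemma mem_occ {P : Fin F → Fin K → Option (Fin S)} {s : Fin S} {p : Fin F × Fin K} :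
    p ∈ occ P s ↔ P p.1 p.2 = some s := by simp [occ]
lemma mem_Fd_of_occ {P : Fin F → Fin K → Option (Fin S)} {s : Fin S} {p : Fin F × Fin K}
    (hp : p ∈ occ P s) : p.1 ∈ Fd P p.2 := by
  rw [mem_occ] at hp; simp [hp]

section Main

variable {P : Fin F → Fin K → Option (Fin S)}
  (h2 : ∀ j, (Fd P j).card = 2)
  (hrow : ∀ (i : Fin F) (j j' : Fin K) (s : Fin S), P i j = some s → P i j' = some s → j = j')
  (hcol : ∀ (i i' : Fin F) (j : Fin K) (s : Fin S), P i j = some s → P i' j = some s → i = i')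
  (hcross : ∀ (a c : Fin F) (b d : Fin K) (s : Fin S),
      (a, b) ≠ (c, d) → P a b = some s → P c d = some s → P a d = none ∧ P c b = none)

section C2
include h2
lemma pr_mem {j : Fin K} {i : Fin F} (hi : i ∈ Fd P j) :
    pr P j i ∈ Fd P j ∧ pr P j i ≠ i := by
  have hne : ((Fd P j).erase i).Nonempty := by
    rw [← Finset.card_pos, Finset.card_erase_of_mem hi, h2 j]; norm_num
  rw [pr, dif_pos hne]
  exact ⟨Finset.mem_of_mem_erase hne.choose_spec, Finset.ne_of_mem_erase hne.choose_spec⟩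
lemma pr_uniq {j : Fin K} {i x : Fin F} (hi : i ∈ Fd P j) (hx : x ∈ Fd P j) (hxi : x ≠ i) :
    x = pr P j i := by
  obtain ⟨a, b, hab, hset⟩ := Finset.card_eq_two.mp (h2 j)
  have hpm := (pr_mem h2 hi).1
  have hpne := (pr_mem h2 hi).2
  rw [hset, Finset.mem_insert, Finset.mem_singleton] at hi hx hpm
  rcases hi with rfl | rfl <;> rcases hx with rfl | rfl <;> rcases hpm with h | h <;> simp_all
lemma pr_invol {j : Fin K} {i : Fin F} (hi : i ∈ Fd P j) :
    pr P j (pr P j i) = i :=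
  (pr_uniq h2 (pr_mem h2 hi).1 hi (Ne.symm (pr_mem h2 hi).2)).symm
end C2

include hrow in
lemma occ_row_inj {s : Fin S} {p q : Fin F × Fin K} (hp : p ∈ occ P s) (hq : q ∈ occ P s)
    (h : p.1 = q.1) : p = q := by
  rw [mem_occ] at hp hq
  exact Prod.ext h (hrow p.1 p.2 q.2 s hp (h ▸ hq))

include hcol in
lemma occ_col_inj {s : Fin S} {p q : Fin F × Fin K} (hp : p ∈ occ P s) (hq : q ∈ occ P s)
    (h : p.2 = q.2) : p = q := by
  rw [mem_occ] at hp hq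
  exact Prod.ext (hcol p.1 q.1 p.2 s hp (h ▸ hq)) h

include hrow in
lemma card_Arows (s : Fin S) : (Arows P s).card = deg P s :=
  Finset.card_image_of_injOn (fun p hp q hq h => occ_row_inj hrow hp hq h)

include hcol in
lemma card_colsOf (s : Fin S) : (colsOf P s).card = deg P s :=
  Finset.card_image_of_injOn (fun p hp q hq h => occ_col_inj hcol hp hq h)

include h2 hcol hcross in
lemma partner_not_A {s : Fin S} {p : Fin F × Fin K} (hp : p ∈ occ P s) :
    pr P p.2 p.1 ∉ Arows P s := by
  intro hmem
  rw [Arows, Finset.mem_image] at hmem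
  obtain ⟨q, hq, hq1⟩ := hmem
  have hFd := mem_Fd_of_occ hp
  have hprm := (pr_mem h2 hFd).1
  have hprne := (pr_mem h2 hFd).2
  by_cases hjj : q.2 = p.2
  · -- same column: col-inj forces q.1 = p.1, but q.1 = pr ≠ p.1
    have := occ_col_inj hcol hq hp hjj
    rw [this] at hq1
    exact hprne hq1.symm
  · have hne : (p.1, p.2) ≠ (q.1, q.2) := by
      intro h; exact hjj (congrArg Prod.snd h).symm
    have := hcross p.1 q.1 p.2 q.2 s hne (mem_occ.mp hp) (mem_occ.mp hq)
    -- this.2 : P q.1 p.2 = none, but q.1 = pr ∈ Fd p.2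
    rw [hq1] at this
    exact (mem_Fd.mp hprm) this.2

include h2 hrow hcol hcross in
lemma deg_le (s : Fin S) : deg P s ≤ F - 1 := by
  rcases (occ P s).eq_empty_or_nonempty with he | ⟨p, hp⟩
  · rw [deg, he]; simp
  · have hsub : Arows P s ⊆ univ.erase (pr P p.2 p.1) := by
      intro v hv
      rw [Finset.mem_erase]
      exact ⟨fun h => partner_not_A h2 hcol hcross hp (h ▸ hv), mem_univ v⟩
    have := Finset.card_le_card hsub
    rwa [Finset.card_erase_of_mem (mem_univ _), Finset.card_univ, Fintype.card_fin,
      card_Arows hrow] at this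

end Main

noncomputable def ctr (P : Fin F → Fin K → Option (Fin S)) (hF : 0 < F) (s : Fin S) : Fin F :=
  if h : (univ \ Arows P s).Nonempty then h.choose else ⟨0, hF⟩

section Stars

variable {P : Fin F → Fin K → Option (Fin S)}
  (h2 : ∀ j, (Fd P j).card = 2)
  (hrow : ∀ (i : Fin F) (j j' : Fin K) (s : Fin S), P i j = some s → P i j' = some s → j = j')
  (hcol : ∀ (i i' : Fin F) (j : Fin K) (s : Fin S), P i j = some s → P i' j = some s → i = i')
  (hcross : ∀ (a c : Fin F) (b d : Fin K) (s : Fin S),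
      (a, b) ≠ (c, d) → P a b = some s → P c d = some s → P a d = none ∧ P c b = none)
  (hF : 0 < F)

include h2 hrow hcol hcross hF

lemma ctr_not_mem (s : Fin S) : ctr P hF s ∉ Arows P s := by
  have hd := deg_le h2 hrow hcol hcross s
  have hc := card_Arows hrow (P := P) s
  have hne : (univ \ Arows P s).Nonempty := by
    rw [← Finset.card_pos, Finset.card_sdiff_of_subset (Finset.subset_univ _), Finset.card_univ,
      Fintype.card_fin]
    omega
  rw [ctr, dif_pos hne]
  have := hne.choose_spec
  rw [Finset.mem_sdiff] at this
  exact this.2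

lemma star_cover {s : Fin S} (hstar : deg P s = F - 1) :
    Arows P s = univ.erase (ctr P hF s) := by
  have hsub : Arows P s ⊆ univ.erase (ctr P hF s) := by
    intro v hv
    rw [Finset.mem_erase]
    refine ⟨fun h => ?_, mem_univ v⟩
    exact ctr_not_mem h2 hrow hcol hcross hF s (h ▸ hv)
  refine Finset.eq_of_subset_of_card_le hsub ?_
  rw [Finset.card_erase_of_mem (mem_univ _), Finset.card_univ, Fintype.card_fin,
    card_Arows hrow, hstar]

lemma star_mem_A {s : Fin S} (hstar : deg P s = F - 1) {v : Fin F}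
    (hv : v ≠ ctr P hF s) : v ∈ Arows P s := by
  rw [star_cover h2 hrow hcol hcross hF hstar]
  exact Finset.mem_erase.mpr ⟨hv, mem_univ v⟩

lemma star_partner {s : Fin S} (hstar : deg P s = F - 1) {p : Fin F × Fin K}
    (hp : p ∈ occ P s) : pr P p.2 p.1 = ctr P hF s := by
  have hna := partner_not_A h2 hcol hcross hp
  rw [star_cover h2 hrow hcol hcross hF hstar] at hna
  by_contra hne
  exact hna (Finset.mem_erase.mpr ⟨hne, mem_univ _⟩)

lemma cols_disjoint {s s' : Fin S} (hss : s ≠ s') (hstar : deg P s = F - 1)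
    (hstar' : deg P s' = F - 1) (hc : ctr P hF s = ctr P hF s') :
    Disjoint (colsOf P s) (colsOf P s') := by
  rw [Finset.disjoint_left]
  intro j hj hj'
  rw [colsOf, Finset.mem_image] at hj hj'
  obtain ⟨p, hp, hp2⟩ := hj
  obtain ⟨q, hq, hq2⟩ := hj'
  have hpq1 : p.1 ≠ q.1 := by
    intro h
    have h1 := mem_occ.mp hp
    have h2' := mem_occ.mp hq
    rw [← hq2] at hp2
    have : p = q := Prod.ext h hp2
    rw [this] at h1
    rw [h1] at h2'
    exact hss (Option.some_injective _ h2')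
  -- q.1 = pr over column j of p.1
  have hpFd : p.1 ∈ Fd P p.2 := mem_Fd_of_occ hp
  have hqFd : q.1 ∈ Fd P p.2 := by
    rw [hp2, ← hq2] at *
    exact mem_Fd_of_occ hq
  have := pr_uniq h2 hpFd hqFd (Ne.symm hpq1)
  rw [star_partner h2 hrow hcol hcross hF hstar hp] at this
  -- q.1 = ctr s = ctr s', but q.1 ∈ Arows s'
  have hqA : q.1 ∈ Arows P s' := Finset.mem_image_of_mem Prod.fst hq
  rw [this, hc] at hqA
  exact ctr_not_mem h2 hrow hcol hcross hF s' hqA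

end Stars


lemma upper_main (F K S m : ℕ) (hF : 3 ≤ F) (hS : S = m * F + 2)
    (P : Fin F → Fin K → Option (Fin S))
    (h2 : ∀ j, (Fd P j).card = 2)
    (hrow : ∀ (i : Fin F) (j j' : Fin K) (s : Fin S), P i j = some s → P i j' = some s → j = j')
    (hcol : ∀ (i i' : Fin F) (j : Fin K) (s : Fin S), P i j = some s → P i' j = some s → i = i')
    (hcross : ∀ (a c : Fin F) (b d : Fin K) (s : Fin S),
      (a, b) ≠ (c, d) → P a b = some s → P c d = some s → P a d = none ∧ P c b = none) :
    2 * K ≤ m * F * (F - 1) + F := by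
  have hF0 : 0 < F := by omega
  have hS0 : 0 < S := by omega
  set s0 : Fin S := ⟨0, hS0⟩ with hs0
  set colr : Fin F → Fin K → Fin S := fun i j => (P i j).getD s0 with hcolrdef
  have hcolr : ∀ {i : Fin F} {j : Fin K} {s : Fin S}, P i j = some s → colr i j = s := by
    intro i j s h; simp [hcolrdef, h]
  set TS : Finset (Fin S) := univ.filter (fun s => deg P s = F - 1) with hTS
  set US : Finset (Fin S) := univ.filter (fun s => deg P s ≠ F - 1) with hUS
  have memTS : ∀ {s : Fin S}, s ∈ TS ↔ deg P s = F - 1 := by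
    intro s; rw [hTS, Finset.mem_filter]; simp
  have memUS : ∀ {s : Fin S}, s ∈ US ↔ deg P s ≠ F - 1 := by
    intro s; rw [hUS, Finset.mem_filter]; simp
  set Bs : Fin S → Finset (Fin F) := fun s => (occ P s).image (fun p => pr P p.2 p.1) with hBs
  have memBs : ∀ {v : Fin F} {s : Fin S},
      v ∈ Bs s ↔ ∃ p ∈ occ P s, pr P p.2 p.1 = v := by
    intro v s; rw [hBs]; simp
  set mv : Fin F → ℕ := fun v => (TS.filter (fun s => ctr P hF0 s = v)).card with hmv
  have hmveq : ∀ v, mv v = (TS.filter (fun s => ctr P hF0 s = v)).card := fun _ => rfl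
  set cellsAt : Fin F → Finset (Fin K) := fun v => univ.filter (fun j => P v j ≠ none)
    with hcellsAt
  have memcellsAt : ∀ {v j}, j ∈ cellsAt v ↔ P v j ≠ none := by
    intro v j; rw [hcellsAt]; simp
  set sC : Fin F → Finset (Fin K) :=
    fun v => univ.filter (fun j => ∃ s, P v j = some s ∧ deg P s = F - 1) with hsC
  have memsC : ∀ {v j}, j ∈ sC v ↔ ∃ s, P v j = some s ∧ deg P s = F - 1 := by
    intro v j; rw [hsC]; simp
  set nC : Fin F → Finset (Fin K) :=
    fun v => univ.filter (fun j => ∃ s, P v j = some s ∧ deg P s ≠ F - 1) with hnC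
  have memnC : ∀ {v j}, j ∈ nC v ↔ ∃ s, P v j = some s ∧ deg P s ≠ F - 1 := by
    intro v j; rw [hnC]; simp
  set slC : Fin F → Finset (Fin K) :=
    fun v => univ.filter (fun j => P v j ≠ none ∧
      ∃ s, P (pr P j v) j = some s ∧ deg P s = F - 1) with hslC
  have memslC : ∀ {v j}, j ∈ slC v ↔ P v j ≠ none ∧
      ∃ s, P (pr P j v) j = some s ∧ deg P s = F - 1 := by
    intro v j; rw [hslC]; simp
  set laC : Fin F → Finset (Fin K) :=
    fun v => univ.filter (fun j => P v j ≠ none ∧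
      ∃ s, P (pr P j v) j = some s ∧ deg P s ≠ F - 1) with hlaC
  have memlaC : ∀ {v j}, j ∈ laC v ↔ P v j ≠ none ∧
      ∃ s, P (pr P j v) j = some s ∧ deg P s ≠ F - 1 := by
    intro v j; rw [hlaC]; simp
  set bv : Fin F → ℕ := fun v => (US.filter (fun s => v ∈ Bs s)).card with hbv
  have hbveq : ∀ v, bv v = (US.filter (fun s => v ∈ Bs s)).card := fun _ => rfl
  -- B1 : cellsAt v splits by own color star/nonstar
  have hB1 : ∀ v, (cellsAt v).card = (sC v).card + (nC v).card := by
    intro v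
    have hunion : cellsAt v = sC v ∪ nC v := by
      ext j
      rw [memcellsAt, Finset.mem_union, memsC, memnC]
      cases hpv : P v j with
      | none => simp
      | some s =>
        constructor
        · intro _
          by_cases hst : deg P s = F - 1
          · exact Or.inl ⟨s, rfl, hst⟩
          · exact Or.inr ⟨s, rfl, hst⟩
        · intro _; simp
    have hdisj : Disjoint (sC v) (nC v) := by
      rw [Finset.disjoint_left]
      intro j hj hj'
      rw [memsC] at hj
      rw [memnC] at hj'
      obtain ⟨s, hs, hst⟩ := hj
      obtain ⟨s', hs', hst'⟩ := hj'
      rw [hs] at hs'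
      exact hst' ((Option.some_injective _ hs') ▸ hst)
    rw [hunion, Finset.card_union_of_disjoint hdisj]
  -- B3 : cellsAt v splits by partner color star/nonstar
  have hB3 : ∀ v, (cellsAt v).card = (slC v).card + (laC v).card := by
    intro v
    have hunion : cellsAt v = slC v ∪ laC v := by
      ext j
      rw [memcellsAt, Finset.mem_union, memslC, memlaC]
      constructor
      · intro hfill
        have hvFd : v ∈ Fd P j := mem_Fd.mpr hfill
        have hw := (pr_mem h2 hvFd).1
        rw [mem_Fd] at hw
        cases hpw : P (pr P j v) j with
        | none => exact absurd hpw hw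
        | some s =>
          by_cases hst : deg P s = F - 1
          · exact Or.inl ⟨hfill, s, rfl, hst⟩
          · exact Or.inr ⟨hfill, s, rfl, hst⟩
      · rintro (⟨hfill, _⟩ | ⟨hfill, _⟩) <;> exact hfill
    have hdisj : Disjoint (slC v) (laC v) := by
      rw [Finset.disjoint_left]
      intro j hj hj'
      rw [memslC] at hj
      rw [memlaC] at hj'
      obtain ⟨_, s, hs, hst⟩ := hj
      obtain ⟨_, s', hs', hst'⟩ := hj'
      rw [hs] at hs'
      exact hst' ((Option.some_injective _ hs') ▸ hst)
    rw [hunion, Finset.card_union_of_disjoint hdisj]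
  -- B2 : card of sC v
  have hB2 : ∀ v, (sC v).card = (TS.filter (fun s => ctr P hF0 s ≠ v)).card := by
    intro v
    refine Finset.card_bij (fun j _ => colr v j) ?_ ?_ ?_
    · intro j hj
      rw [memsC] at hj
      obtain ⟨s, hs, hst⟩ := hj
      rw [hcolr hs, Finset.mem_filter]
      refine ⟨memTS.mpr hst, fun hctr => ?_⟩
      have hvA : v ∈ Arows P s :=
        Finset.mem_image_of_mem Prod.fst ((mem_occ (p := (v, j))).mpr hs)
      exact ctr_not_mem h2 hrow hcol hcross hF0 s (hctr ▸ hvA)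
    · intro j hj j' hj' heq
      rw [memsC] at hj hj'
      obtain ⟨s, hs, _⟩ := hj
      obtain ⟨s', hs', _⟩ := hj'
      rw [hcolr hs, hcolr hs'] at heq
      exact hrow v j j' s hs (heq ▸ hs')
    · intro s hsmem
      rw [Finset.mem_filter] at hsmem
      have hst : deg P s = F - 1 := memTS.mp hsmem.1
      have hctr : ctr P hF0 s ≠ v := hsmem.2
      have hvA : v ∈ Arows P s :=
        star_mem_A h2 hrow hcol hcross hF0 hst (fun h => hctr h.symm)
      rw [Arows, Finset.mem_image] at hvA
      obtain ⟨p, hp, hp1⟩ := hvA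
      exact ⟨p.2, memsC.mpr ⟨s, hp1 ▸ mem_occ.mp hp, hst⟩, hcolr (hp1 ▸ mem_occ.mp hp)⟩
  -- B4 : card of slC v
  have hB4 : ∀ v, (slC v).card = mv v * (F - 1) := by
    intro v
    have hbu : slC v = (TS.filter (fun s => ctr P hF0 s = v)).biUnion (colsOf P) := by
      ext j
      rw [memslC, Finset.mem_biUnion]
      constructor
      · rintro ⟨hfill, s, hps, hst⟩
        have hvFd : v ∈ Fd P j := mem_Fd.mpr hfill
        have hwocc : ((pr P j v, j) : Fin F × Fin K) ∈ occ P s := mem_occ.mpr hps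
        have hctr : pr P j (pr P j v) = ctr P hF0 s :=
          star_partner h2 hrow hcol hcross hF0 hst hwocc
        rw [pr_invol h2 hvFd] at hctr
        exact ⟨s, Finset.mem_filter.mpr ⟨memTS.mpr hst, hctr.symm⟩,
          Finset.mem_image_of_mem Prod.snd hwocc⟩
      · rintro ⟨s, hsmem, hjcols⟩
        rw [Finset.mem_filter] at hsmem
        have hst : deg P s = F - 1 := memTS.mp hsmem.1
        rw [colsOf, Finset.mem_image] at hjcols
        obtain ⟨p, hp, hp2⟩ := hjcols
        have hpa : P p.1 j = some s := hp2 ▸ mem_occ.mp hp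
        have haFd : p.1 ∈ Fd P j := mem_Fd.mpr (by simp [hpa])
        have hprv : pr P j p.1 = v := by
          have h' := star_partner h2 hrow hcol hcross hF0 hst hp
          rw [hp2] at h'
          rw [h', hsmem.2]
        have hvFd : v ∈ Fd P j := hprv ▸ (pr_mem h2 haFd).1
        have hprvv : pr P j v = p.1 := by
          rw [← hprv]; exact pr_invol h2 haFd
        refine ⟨mem_Fd.mp hvFd, s, ?_, hst⟩
        rw [hprvv]; exact hpa
    have hdisj' : ∀ x ∈ TS.filter (fun s => ctr P hF0 s = v),
        ∀ y ∈ TS.filter (fun s => ctr P hF0 s = v), x ≠ y → Disjoint (colsOf P x) (colsOf P y) := by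
      intro x hx y hy hxy
      rw [Finset.mem_filter] at hx hy
      exact cols_disjoint h2 hrow hcol hcross hF0 hxy (memTS.mp hx.1) (memTS.mp hy.1)
        (hx.2.trans hy.2.symm)
    have hcong : ∀ s ∈ TS.filter (fun s => ctr P hF0 s = v), (colsOf P s).card = F - 1 := by
      intro s hs
      rw [Finset.mem_filter] at hs
      rw [card_colsOf hcol, memTS.mp hs.1]
    rw [hbu, Finset.card_biUnion hdisj', Finset.sum_congr rfl hcong, Finset.sum_const,
      smul_eq_mul, hmveq v]
  -- B6 : capacity
  have hB6 : ∀ v, (nC v).card + bv v ≤ US.card := by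
    intro v
    have h1 : (nC v).card ≤ (US.filter (fun s => ¬ v ∈ Bs s)).card := by
      refine Finset.card_le_card_of_injOn (fun j => colr v j) ?_ ?_
      · intro j hj
        dsimp only
        rw [Finset.mem_coe, memnC] at hj
        obtain ⟨s, hs, hst⟩ := hj
        rw [hcolr hs, Finset.mem_coe, Finset.mem_filter]
        refine ⟨memUS.mpr hst, fun hmem => ?_⟩
        rw [memBs] at hmem
        obtain ⟨q, hq, hq1⟩ := hmem
        have hvocc : ((v, j) : Fin F × Fin K) ∈ occ P s := mem_occ.mpr hs
        by_cases hqv : q = (v, j)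
        · rw [hqv] at hq1
          have hvFd : v ∈ Fd P j := mem_Fd_of_occ hvocc
          exact (pr_mem h2 hvFd).2 hq1
        · have hne : (v, j) ≠ (q.1, q.2) := by
            intro h
            exact hqv (Prod.ext (congrArg Prod.fst h).symm (congrArg Prod.snd h).symm)
          have hcr := hcross v q.1 j q.2 s hne hs (mem_occ.mp hq)
          have hvFdq : v ∈ Fd P q.2 := by
            rw [← hq1]; exact (pr_mem h2 (mem_Fd_of_occ hq)).1
          exact (mem_Fd.mp hvFdq) hcr.1
      · intro j hj j' hj' heq
        rw [Finset.mem_coe, memnC] at hj hj'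
        obtain ⟨s, hs, _⟩ := hj
        obtain ⟨s', hs', _⟩ := hj'
        dsimp only at heq
        rw [hcolr hs, hcolr hs'] at heq
        exact hrow v j j' s hs (heq ▸ hs')
    have h2' := Finset.card_filter_add_card_filter_not
      (s := US) (p := fun s => v ∈ Bs s)
    have e0 := hbveq v
    omega
  -- B7 : lam bound
  have hB7 : ∀ v, (laC v).card ≤ bv v * (F - 2) := by
    intro v
    have hsub : laC v ⊆ (US.filter (fun s => v ∈ Bs s)).biUnion (colsOf P) := by
      intro j hj
      rw [memlaC] at hj
      obtain ⟨hfill, s, hps, hst⟩ := hj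
      have hvFd : v ∈ Fd P j := mem_Fd.mpr hfill
      have hwocc : ((pr P j v, j) : Fin F × Fin K) ∈ occ P s := mem_occ.mpr hps
      rw [Finset.mem_biUnion]
      refine ⟨s, Finset.mem_filter.mpr ⟨memUS.mpr hst, ?_⟩,
        Finset.mem_image_of_mem Prod.snd hwocc⟩
      rw [memBs]
      exact ⟨(pr P j v, j), hwocc, pr_invol h2 hvFd⟩
    calc (laC v).card ≤ _ := Finset.card_le_card hsub
      _ ≤ ∑ s ∈ US.filter (fun s => v ∈ Bs s), (colsOf P s).card := Finset.card_biUnion_le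
      _ ≤ ∑ _s ∈ US.filter (fun s => v ∈ Bs s), (F - 2) := by
        refine Finset.sum_le_sum (fun s hs => ?_)
        rw [card_colsOf hcol]
        have hd := deg_le h2 hrow hcol hcross (P := P) s
        rw [Finset.mem_filter] at hs
        have hne := memUS.mp hs.1
        omega
      _ = bv v * (F - 2) := by rw [Finset.sum_const, smul_eq_mul, hbveq v]
  -- B8
  have hB8 : TS.card + US.card = S := by
    have h' := Finset.card_filter_add_card_filter_not
      (s := (univ : Finset (Fin S))) (p := fun s => deg P s = F - 1)
    rw [Finset.card_univ, Fintype.card_fin] at h'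
    rw [hTS, hUS]
    exact h'
  -- B9
  have hB9 : ∑ v, mv v = TS.card := by
    rw [hmv]
    exact (Finset.card_eq_sum_card_fiberwise (fun s _ => mem_univ (ctr P hF0 s))).symm
  -- B10
  have hB10 : ∑ v, (cellsAt v).card = 2 * K := by
    set cells : Finset (Fin F × Fin K) := univ.filter (fun p => P p.1 p.2 ≠ none) with hcells
    have memcells : ∀ {p : Fin F × Fin K}, p ∈ cells ↔ P p.1 p.2 ≠ none := by
      intro p; rw [hcells]; simp
    have e1 : cells.card = ∑ v, (cells.filter (fun p => p.1 = v)).card :=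
      Finset.card_eq_sum_card_fiberwise (fun p _ => mem_univ p.1)
    have e2 : ∀ v, (cells.filter (fun p => p.1 = v)).card = (cellsAt v).card := by
      intro v
      refine Finset.card_bij (fun p _ => p.2) ?_ ?_ ?_
      · intro p hp
        rw [Finset.mem_filter] at hp
        have hp1 := memcells.mp hp.1
        rw [memcellsAt]
        rw [← hp.2]
        exact hp1
      · intro p hp q hq heq
        rw [Finset.mem_filter] at hp hq
        exact Prod.ext (hp.2.trans hq.2.symm) heq
      · intro j hj
        rw [memcellsAt] at hj
        exact ⟨(v, j), Finset.mem_filter.mpr ⟨memcells.mpr hj, rfl⟩, rfl⟩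
    have e3 : cells.card = ∑ j, (cells.filter (fun p => p.2 = j)).card :=
      Finset.card_eq_sum_card_fiberwise (fun p _ => mem_univ p.2)
    have e4 : ∀ j, (cells.filter (fun p => p.2 = j)).card = 2 := by
      intro j
      rw [← h2 j]
      refine Finset.card_bij (fun p _ => p.1) ?_ ?_ ?_
      · intro p hp
        rw [Finset.mem_filter] at hp
        have hp1 := memcells.mp hp.1
        rw [mem_Fd]
        rw [← hp.2]
        exact hp1
      · intro p hp q hq heq
        rw [Finset.mem_filter] at hp hq
        exact Prod.ext heq (hp.2.trans hq.2.symm)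
      · intro i hi
        rw [mem_Fd] at hi
        exact ⟨(i, j), Finset.mem_filter.mpr ⟨memcells.mpr hi, rfl⟩, rfl⟩
    calc ∑ v, (cellsAt v).card = ∑ v, (cells.filter (fun p => p.1 = v)).card :=
          Finset.sum_congr rfl (fun v _ => (e2 v).symm)
      _ = cells.card := e1.symm
      _ = ∑ j, (cells.filter (fun p => p.2 = j)).card := e3
      _ = ∑ _j : Fin K, 2 := Finset.sum_congr rfl (fun j _ => e4 j)
      _ = 2 * K := by rw [Finset.sum_const, Finset.card_univ, Fintype.card_fin, smul_eq_mul,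
          mul_comm]
  -- per-vertex equations
  have hcardcells : ∀ v, (cellsAt v).card + mv v = TS.card + (nC v).card := by
    intro v
    have hsplit := Finset.card_filter_add_card_filter_not
      (s := TS) (p := fun s => ctr P hF0 s = v)
    have e1 := hB1 v
    have e2 := hB2 v
    have e3 := hmveq v
    have e5 : (TS.filter (fun s => ctr P hF0 s ≠ v)).card
        = (TS.filter (fun a => ¬ ctr P hF0 a = v)).card := rfl
    omega
  have hEq : ∀ v, TS.card + (nC v).card = mv v * F + (laC v).card := by
    intro v
    have h1 := hcardcells v
    have h3 := hB3 v
    have h4 := hB4 v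
    have hx : mv v * (F - 1) + mv v = mv v * F := by
      rw [← Nat.mul_succ]
      congr 1
      omega
    rw [h3, h4] at h1
    linarith
  -- mv bound
  have hmle : ∀ v, mv v ≤ m := by
    intro v
    by_contra hcon
    push_neg at hcon
    have h1 : (m + 1) * F ≤ mv v * F := Nat.mul_le_mul_right F hcon
    have h2' : mv v * F ≤ TS.card + (nC v).card := by
      have := hEq v; linarith
    have h3 : (nC v).card ≤ US.card := by have := hB6 v; omega
    have h4 : (m + 1) * F = m * F + F := by ring
    have h5 : TS.card + US.card = m * F + 2 := by rw [hB8, hS]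
    linarith
  have hdvex : ∀ v, ∃ d, mv v + d = m := fun v => ⟨m - mv v, by have := hmle v; omega⟩
  choose dv hdv using hdvex
  -- lambda bound
  have hlam : ∀ v, (laC v).card ≤ 1 + dv v * (F - 1) := by
    intro v
    by_cases hb : bv v ≤ dv v
    · calc (laC v).card ≤ bv v * (F - 2) := hB7 v
        _ ≤ dv v * (F - 2) := Nat.mul_le_mul_right _ hb
        _ ≤ dv v * (F - 1) := Nat.mul_le_mul_left _ (by omega)
        _ ≤ 1 + dv v * (F - 1) := by omega
    · push_neg at hb
      have hb' : dv v + 1 ≤ bv v := hb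
      have e1 : TS.card + (nC v).card = mv v * F + (laC v).card := hEq v
      have e2 : (nC v).card + bv v ≤ US.card := hB6 v
      have e3 : TS.card + US.card = m * F + 2 := by rw [hB8, hS]
      have e4 : mv v * F + dv v * F = m * F := by rw [← add_mul, hdv v]
      have e5 : dv v * (F - 1) + dv v = dv v * F := by
        rw [← Nat.mul_succ]; congr 1; omega
      linarith
  -- global sums
  have hsum1 : 2 * K + TS.card = F * TS.card + ∑ v, (nC v).card := by
    have h' := Finset.sum_congr rfl (fun v (_ : v ∈ (univ : Finset (Fin F))) => hcardcells v)
    rw [Finset.sum_add_distrib, Finset.sum_add_distrib, hB10, hB9, Finset.sum_const,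
      Finset.card_univ, Fintype.card_fin, smul_eq_mul] at h'
    linarith
  have hsum2 : F * TS.card + ∑ v, (nC v).card = TS.card * F + ∑ v, (laC v).card := by
    have h' := Finset.sum_congr rfl (fun v (_ : v ∈ (univ : Finset (Fin F))) => hEq v)
    rw [Finset.sum_add_distrib, Finset.sum_add_distrib, Finset.sum_const, Finset.card_univ,
      Fintype.card_fin, smul_eq_mul, ← Finset.sum_mul, hB9] at h'
    linarith
  have hsum3 : ∑ v, (laC v).card ≤ F + (∑ v, dv v) * (F - 1) := by
    calc ∑ v, (laC v).card ≤ ∑ v, (1 + dv v * (F - 1)) := Finset.sum_le_sum (fun v _ => hlam v)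
      _ = F + (∑ v, dv v) * (F - 1) := by
        rw [Finset.sum_add_distrib, Finset.sum_const, Finset.card_univ, Fintype.card_fin,
          smul_eq_mul, mul_one, ← Finset.sum_mul]
  have hsum4 : TS.card + ∑ v, dv v = F * m := by
    have h' := Finset.sum_congr rfl (fun v (_ : v ∈ (univ : Finset (Fin F))) => hdv v)
    rw [Finset.sum_add_distrib, hB9, Finset.sum_const, Finset.card_univ, Fintype.card_fin,
      smul_eq_mul] at h'
    exact h'
  -- final arithmetic
  have hFsub : F - 1 + 1 = F := by omega
  set t := TS.card with ht
  set N := ∑ v, (nC v).card with hN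
  set L := ∑ v, (laC v).card with hL
  set D := ∑ v, dv v with hD
  have key1 : t * F = t * (F - 1) + t := by rw [← Nat.mul_succ]; congr 1; omega
  have key2 : F * t = t * F := by ring
  have key3 : D * F = D * (F - 1) + D := by rw [← Nat.mul_succ]; congr 1; omega
  have key4 : (t + D) * (F - 1) = t * (F - 1) + D * (F - 1) := by ring
  have key5 : (t + D) * (F - 1) = F * m * (F - 1) := by rw [hsum4]
  have key6 : F * m * (F - 1) = m * F * (F - 1) := by ring
  -- 2K + t = F*t + N ; F*t + N = t*F + L ; L ≤ F + D*(F-1)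
  linarith [hsum1, hsum2, hsum3]

lemma upper_two (K S m : ℕ) (hS : S = 2 * m + 2)
    (P : Fin 2 → Fin K → Option (Fin S))
    (h2 : ∀ j, (Fd P j).card = 2)
    (hrow : ∀ (i : Fin 2) (j j' : Fin K) (s : Fin S), P i j = some s → P i j' = some s → j = j')
    (hcol : ∀ (i i' : Fin 2) (j : Fin K) (s : Fin S), P i j = some s → P i' j = some s → i = i')
    (hcross : ∀ (a c : Fin 2) (b d : Fin K) (s : Fin S),
      (a, b) ≠ (c, d) → P a b = some s → P c d = some s → P a d = none ∧ P c b = none) :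
    K ≤ m + 1 := by
  have hS0 : 0 < S := by omega
  set s0 : Fin S := ⟨0, hS0⟩ with hs0
  set colr : Fin 2 → Fin K → Fin S := fun i j => (P i j).getD s0 with hcolrdef
  set cells : Finset (Fin 2 × Fin K) := univ.filter (fun p => P p.1 p.2 ≠ none) with hcells
  have memcells : ∀ {p : Fin 2 × Fin K}, p ∈ cells ↔ P p.1 p.2 ≠ none := by
    intro p; rw [hcells]; simp
  have e3 : cells.card = ∑ j, (cells.filter (fun p => p.2 = j)).card :=
    Finset.card_eq_sum_card_fiberwise (fun p _ => mem_univ p.2)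
  have e4 : ∀ j, (cells.filter (fun p => p.2 = j)).card = 2 := by
    intro j
    have hb : (cells.filter (fun p => p.2 = j)).card = (Fd P j).card := by
      refine Finset.card_bij (fun p _ => p.1) ?_ ?_ ?_
      · intro p hp
        rw [Finset.mem_filter] at hp
        have hp1 := memcells.mp hp.1
        rw [mem_Fd]
        rw [← hp.2]
        exact hp1
      · intro p hp q hq heq
        rw [Finset.mem_filter] at hp hq
        exact Prod.ext heq (hp.2.trans hq.2.symm)
      · intro i hi
        rw [mem_Fd] at hi
        exact ⟨(i, j), Finset.mem_filter.mpr ⟨memcells.mpr hi, rfl⟩, rfl⟩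
    rw [hb, h2 j]
  have hcard2K : cells.card = 2 * K := by
    rw [e3]
    calc ∑ j, (cells.filter (fun p => p.2 = j)).card = ∑ _j : Fin K, 2 :=
          Finset.sum_congr rfl (fun j _ => e4 j)
      _ = 2 * K := by
          rw [Finset.sum_const, Finset.card_univ, Fintype.card_fin, smul_eq_mul, mul_comm]
  have e5 : cells.card = ∑ s, (cells.filter (fun p => colr p.1 p.2 = s)).card :=
    Finset.card_eq_sum_card_fiberwise (fun p _ => mem_univ _)
  have e6 : ∀ s, cells.filter (fun p => colr p.1 p.2 = s) = occ P s := by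
    intro s
    ext p
    rw [Finset.mem_filter, memcells, mem_occ]
    cases hp : P p.1 p.2 with
    | none => simp [hcolrdef, hp]
    | some u => simp [hcolrdef, hp]
  have e7 : ∀ s : Fin S, deg P s ≤ 1 := by
    intro s
    have := deg_le h2 hrow hcol hcross (P := P) s
    omega
  have e8 : (2 : ℕ) * K ≤ S := by
    rw [← hcard2K, e5]
    calc ∑ s, (cells.filter (fun p => colr p.1 p.2 = s)).card
        = ∑ s, deg P s := Finset.sum_congr rfl (fun s _ => by rw [e6 s, deg])
      _ ≤ ∑ _s : Fin S, 1 := Finset.sum_le_sum (fun s _ => e7 s)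
      _ = S := by rw [Finset.sum_const, Finset.card_univ, Fintype.card_fin, smul_eq_mul, mul_one]
  omega

end PDAProof

namespace PDACon
open Finset


abbrev Pt (F : ℕ) := Σ b : Fin F, Fin b.val
abbrev Ct (F m : ℕ) := (Fin m × Pt F) ⊕ Fin (F / 2)

def enc (m F : ℕ) (x : Fin m × Fin F) : Fin (m * F + 2) :=
  ⟨(finProdFinEquiv x).val, by have := (finProdFinEquiv x).isLt; omega⟩

lemma enc_lt (m F : ℕ) (x : Fin m × Fin F) : (enc m F x).val < m * F :=
  (finProdFinEquiv x).isLt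

lemma enc_inj {m F : ℕ} {x y : Fin m × Fin F} (h : enc m F x = enc m F y) : x = y := by
  have hval := congrArg Fin.val h
  exact finProdFinEquiv.injective (Fin.ext hval)

def cA (F m : ℕ) : Fin (m * F + 2) := ⟨m * F, by omega⟩
def cB (F m : ℕ) : Fin (m * F + 2) := ⟨m * F + 1, by omega⟩

def loF {F : ℕ} (q : Pt F) : Fin F := ⟨q.2.val, q.2.isLt.trans q.1.isLt⟩

def P0 (F m : ℕ) (i : Fin F) : Ct F m → Option (Fin (m * F + 2))
  | Sum.inl (μ, q) =>
      if i.val = q.2.val then some (enc m F (μ, q.1))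
      else if i.val = q.1.val then some (enc m F (μ, loF q))
      else none
  | Sum.inr k =>
      if i.val = 2 * k.val then some (cA F m)
      else if i.val = 2 * k.val + 1 then some (cB F m)
      else none

lemma P0_inl_eq {F m : ℕ} (i : Fin F) (μ : Fin m) (q : Pt F) :
    P0 F m i (Sum.inl (μ, q)) =
      if i.val = q.2.val then some (enc m F (μ, q.1))
      else if i.val = q.1.val then some (enc m F (μ, loF q))
      else none := rfl

lemma P0_inr_eq {F m : ℕ} (i : Fin F) (k : Fin (F/2)) :
    P0 F m i (Sum.inr k) =
      if i.val = 2 * k.val then some (cA F m)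
      else if i.val = 2 * k.val + 1 then some (cB F m)
      else none := rfl

lemma P0_inl_elim {F m : ℕ} {i : Fin F} {μ : Fin m} {q : Pt F} {s : Fin (m*F+2)}
    (h : P0 F m i (Sum.inl (μ, q)) = some s) :
    (i.val = q.2.val ∧ s = enc m F (μ, q.1)) ∨ (i.val = q.1.val ∧ s = enc m F (μ, loF q)) := by
  rw [P0_inl_eq] at h
  split_ifs at h with h1 h2
  · exact Or.inl ⟨h1, (Option.some_injective _ h).symm⟩
  · exact Or.inr ⟨h2, (Option.some_injective _ h).symm⟩

lemma P0_inr_elim {F m : ℕ} {i : Fin F} {k : Fin (F/2)} {s : Fin (m*F+2)}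
    (h : P0 F m i (Sum.inr k) = some s) :
    (i.val = 2 * k.val ∧ s = cA F m) ∨ (i.val = 2 * k.val + 1 ∧ s = cB F m) := by
  rw [P0_inr_eq] at h
  split_ifs at h with h1 h2
  · exact Or.inl ⟨h1, (Option.some_injective _ h).symm⟩
  · exact Or.inr ⟨h2, (Option.some_injective _ h).symm⟩

lemma P0_inl_none {F m : ℕ} {i : Fin F} {μ : Fin m} {q : Pt F}
    (h1 : i.val ≠ q.2.val) (h2 : i.val ≠ q.1.val) :
    P0 F m i (Sum.inl (μ, q)) = none := by
  rw [P0_inl_eq, if_neg h1, if_neg h2]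

lemma P0_inr_none {F m : ℕ} {i : Fin F} {k : Fin (F/2)}
    (h1 : i.val ≠ 2 * k.val) (h2 : i.val ≠ 2 * k.val + 1) :
    P0 F m i (Sum.inr k) = none := by
  rw [P0_inr_eq, if_neg h1, if_neg h2]

lemma sigma_ext {F : ℕ} {q q' : Pt F} (h1 : q.1.val = q'.1.val) (h2 : q.2.val = q'.2.val) :
    q = q' := by
  obtain ⟨b, a⟩ := q
  obtain ⟨b', a'⟩ := q'
  dsimp at h1 h2
  have hb : b = b' := Fin.ext h1
  subst hb
  have ha : a = a' := Fin.ext h2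
  subst ha
  rfl

lemma lo_lt_hi {F : ℕ} (q : Pt F) : q.2.val < q.1.val := q.2.isLt

-- the value of a star color is < m*F, the matching colors are ≥ m*F
lemma enc_ne_cA {m F : ℕ} (x : Fin m × Fin F) : enc m F x ≠ cA F m := by
  intro h
  have := congrArg Fin.val h
  have h2 := enc_lt m F x
  rw [this] at h2
  simp [cA] at h2
lemma enc_ne_cB {m F : ℕ} (x : Fin m × Fin F) : enc m F x ≠ cB F m := by
  intro h
  have := congrArg Fin.val h
  have h2 := enc_lt m F x
  rw [this] at h2
  simp [cB] at h2
lemma cA_ne_cB {m F : ℕ} : cA F m ≠ cB F m := by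
  intro h
  have := congrArg Fin.val h
  simp [cA, cB] at this

-- row injectivity
lemma P0_row {F m : ℕ} {i : Fin F} {c c' : Ct F m} {s : Fin (m*F+2)}
    (h : P0 F m i c = some s) (h' : P0 F m i c' = some s) : c = c' := by
  match c, c' with
  | Sum.inl (μ, q), Sum.inl (μ', q') =>
    rcases P0_inl_elim h with ⟨hi, hs⟩ | ⟨hi, hs⟩ <;>
      rcases P0_inl_elim h' with ⟨hi', hs'⟩ | ⟨hi', hs'⟩
    · have hp := enc_inj (hs ▸ hs' ▸ rfl : enc m F (μ, q.1) = enc m F (μ', q'.1))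
      have hμ : μ = μ' := congrArg Prod.fst hp
      have hy : q.1.val = q'.1.val := congrArg Fin.val (congrArg Prod.snd hp)
      have := sigma_ext hy (hi ▸ hi')
      rw [hμ, this]
    · -- i = lo q, i = hi q' : contradiction
      have hp := enc_inj (hs ▸ hs' ▸ rfl : enc m F (μ, q.1) = enc m F (μ', loF q'))
      have hy : q.1.val = q'.2.val := congrArg Fin.val (congrArg Prod.snd hp)
      have l1 := lo_lt_hi q
      have l2 := lo_lt_hi q'
      omega
    · have hp := enc_inj (hs ▸ hs' ▸ rfl : enc m F (μ, loF q) = enc m F (μ', q'.1))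
      have hy : q.2.val = q'.1.val := congrArg Fin.val (congrArg Prod.snd hp)
      have l1 := lo_lt_hi q
      have l2 := lo_lt_hi q'
      omega
    · have hp := enc_inj (hs ▸ hs' ▸ rfl : enc m F (μ, loF q) = enc m F (μ', loF q'))
      have hμ : μ = μ' := congrArg Prod.fst hp
      have hy : q.2.val = q'.2.val := congrArg Fin.val (congrArg Prod.snd hp)
      have := sigma_ext (hi ▸ hi') hy
      rw [hμ, this]
  | Sum.inl (μ, q), Sum.inr k =>
    exfalso
    rcases P0_inl_elim h with ⟨_, hs⟩ | ⟨_, hs⟩ <;>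
      rcases P0_inr_elim h' with ⟨_, hs'⟩ | ⟨_, hs'⟩
    · exact enc_ne_cA _ (hs ▸ hs')
    · exact enc_ne_cB _ (hs ▸ hs')
    · exact enc_ne_cA _ (hs ▸ hs')
    · exact enc_ne_cB _ (hs ▸ hs')
  | Sum.inr k, Sum.inl (μ, q) =>
    exfalso
    rcases P0_inr_elim h with ⟨_, hs⟩ | ⟨_, hs⟩ <;>
      rcases P0_inl_elim h' with ⟨_, hs'⟩ | ⟨_, hs'⟩
    · exact enc_ne_cA _ (hs' ▸ hs)
    · exact enc_ne_cA _ (hs' ▸ hs)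
    · exact enc_ne_cB _ (hs' ▸ hs)
    · exact enc_ne_cB _ (hs' ▸ hs)
  | Sum.inr k, Sum.inr k' =>
    rcases P0_inr_elim h with ⟨hi, hs⟩ | ⟨hi, hs⟩ <;>
      rcases P0_inr_elim h' with ⟨hi', hs'⟩ | ⟨hi', hs'⟩
    · have : k = k' := Fin.ext (by omega)
      rw [this]
    · exact absurd (hs ▸ hs') cA_ne_cB
    · exact absurd (hs' ▸ hs) cA_ne_cB
    · have : k = k' := Fin.ext (by omega)
      rw [this]

-- column injectivity
lemma P0_col {F m : ℕ} {i i' : Fin F} {c : Ct F m} {s : Fin (m*F+2)}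
    (h : P0 F m i c = some s) (h' : P0 F m i' c = some s) : i = i' := by
  match c with
  | Sum.inl (μ, q) =>
    rcases P0_inl_elim h with ⟨hi, hs⟩ | ⟨hi, hs⟩ <;>
      rcases P0_inl_elim h' with ⟨hi', hs'⟩ | ⟨hi', hs'⟩
    · exact Fin.ext (by omega)
    · have hp := enc_inj (hs ▸ hs' ▸ rfl : enc m F (μ, q.1) = enc m F (μ, loF q))
      have hy : q.1.val = q.2.val := congrArg Fin.val (congrArg Prod.snd hp)
      have := lo_lt_hi q
      omega
    · have hp := enc_inj (hs ▸ hs' ▸ rfl : enc m F (μ, loF q) = enc m F (μ, q.1))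
      have hy : q.2.val = q.1.val := congrArg Fin.val (congrArg Prod.snd hp)
      have := lo_lt_hi q
      omega
    · exact Fin.ext (by omega)
  | Sum.inr k =>
    rcases P0_inr_elim h with ⟨hi, hs⟩ | ⟨hi, hs⟩ <;>
      rcases P0_inr_elim h' with ⟨hi', hs'⟩ | ⟨hi', hs'⟩
    · exact Fin.ext (by omega)
    · exact absurd (hs ▸ hs') cA_ne_cB
    · exact absurd (hs' ▸ hs) cA_ne_cB
    · exact Fin.ext (by omega)


-- cross condition
lemma P0_cross {F m : ℕ} {i i' : Fin F} {c c' : Ct F m} {s : Fin (m*F+2)}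
    (hne : (i, c) ≠ (i', c'))
    (h : P0 F m i c = some s) (h' : P0 F m i' c' = some s) :
    P0 F m i c' = none ∧ P0 F m i' c = none := by
  match c, c' with
  | Sum.inl (μ, q), Sum.inl (μ', q') =>
    rcases P0_inl_elim h with ⟨hi, hs⟩ | ⟨hi, hs⟩ <;>
      rcases P0_inl_elim h' with ⟨hi', hs'⟩ | ⟨hi', hs'⟩
    · -- i at lo q (other hi q), i' at lo q' (other hi q')
      have hp := enc_inj (hs ▸ hs' ▸ rfl : enc m F (μ, q.1) = enc m F (μ', q'.1))
      have hμ : μ = μ' := congrArg Prod.fst hp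
      have hy : q.1.val = q'.1.val := congrArg Fin.val (congrArg Prod.snd hp)
      have l1 := lo_lt_hi q
      have l2 := lo_lt_hi q'
      have hii : i.val ≠ i'.val := by
        intro hv
        exact hne (by
          have hqq : q = q' := sigma_ext hy (by omega)
          have : i = i' := Fin.ext hv
          rw [this, hμ, hqq])
      exact ⟨P0_inl_none (by omega) (by omega), P0_inl_none (by omega) (by omega)⟩
    · -- i at lo q (other hi q), i' at hi q' (other lo q')
      have hp := enc_inj (hs ▸ hs' ▸ rfl : enc m F (μ, q.1) = enc m F (μ', loF q'))
      have hy : q.1.val = q'.2.val := congrArg Fin.val (congrArg Prod.snd hp)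
      have l1 := lo_lt_hi q
      have l2 := lo_lt_hi q'
      have hii : i.val ≠ i'.val := by omega
      exact ⟨P0_inl_none (by omega) (by omega), P0_inl_none (by omega) (by omega)⟩
    · have hp := enc_inj (hs ▸ hs' ▸ rfl : enc m F (μ, loF q) = enc m F (μ', q'.1))
      have hy : q.2.val = q'.1.val := congrArg Fin.val (congrArg Prod.snd hp)
      have l1 := lo_lt_hi q
      have l2 := lo_lt_hi q'
      have hii : i.val ≠ i'.val := by omega
      exact ⟨P0_inl_none (by omega) (by omega), P0_inl_none (by omega) (by omega)⟩
    · have hp := enc_inj (hs ▸ hs' ▸ rfl : enc m F (μ, loF q) = enc m F (μ', loF q'))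
      have hμ : μ = μ' := congrArg Prod.fst hp
      have hy : q.2.val = q'.2.val := congrArg Fin.val (congrArg Prod.snd hp)
      have l1 := lo_lt_hi q
      have l2 := lo_lt_hi q'
      have hii : i.val ≠ i'.val := by
        intro hv
        exact hne (by
          have hqq : q = q' := sigma_ext (by omega) hy
          have : i = i' := Fin.ext hv
          rw [this, hμ, hqq])
      exact ⟨P0_inl_none (by omega) (by omega), P0_inl_none (by omega) (by omega)⟩
  | Sum.inl (μ, q), Sum.inr k =>
    exfalso
    rcases P0_inl_elim h with ⟨_, hs⟩ | ⟨_, hs⟩ <;>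
      rcases P0_inr_elim h' with ⟨_, hs'⟩ | ⟨_, hs'⟩
    · exact enc_ne_cA _ (hs ▸ hs')
    · exact enc_ne_cB _ (hs ▸ hs')
    · exact enc_ne_cA _ (hs ▸ hs')
    · exact enc_ne_cB _ (hs ▸ hs')
  | Sum.inr k, Sum.inl (μ, q) =>
    exfalso
    rcases P0_inr_elim h with ⟨_, hs⟩ | ⟨_, hs⟩ <;>
      rcases P0_inl_elim h' with ⟨_, hs'⟩ | ⟨_, hs'⟩
    · exact enc_ne_cA _ (hs' ▸ hs)
    · exact enc_ne_cA _ (hs' ▸ hs)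
    · exact enc_ne_cB _ (hs' ▸ hs)
    · exact enc_ne_cB _ (hs' ▸ hs)
  | Sum.inr k, Sum.inr k' =>
    rcases P0_inr_elim h with ⟨hi, hs⟩ | ⟨hi, hs⟩ <;>
      rcases P0_inr_elim h' with ⟨hi', hs'⟩ | ⟨hi', hs'⟩
    · have hkk : k.val ≠ k'.val := by
        intro hv
        exact hne (by
          have hk : k = k' := Fin.ext hv
          have : i = i' := Fin.ext (by omega)
          rw [this, hk])
      exact ⟨P0_inr_none (by omega) (by omega), P0_inr_none (by omega) (by omega)⟩
    · exact absurd (hs ▸ hs') cA_ne_cB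
    · exact absurd (hs' ▸ hs) cA_ne_cB
    · have hkk : k.val ≠ k'.val := by
        intro hv
        exact hne (by
          have hk : k = k' := Fin.ext hv
          have : i = i' := Fin.ext (by omega)
          rw [this, hk])
      exact ⟨P0_inr_none (by omega) (by omega), P0_inr_none (by omega) (by omega)⟩

-- column star count
lemma P0_count {F m : ℕ} (hF : 2 ≤ F) (c : Ct F m) :
    (univ.filter (fun i => P0 F m i c = none)).card = F - 2 := by
  have hsplit := Finset.card_filter_add_card_filter_not
    (s := (univ : Finset (Fin F))) (p := fun i => P0 F m i c = none)
  rw [Finset.card_univ, Fintype.card_fin] at hsplit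
  have h2 : (univ.filter (fun i => ¬ P0 F m i c = none)).card = 2 := by
    match c with
    | Sum.inl (μ, q) =>
      have hset : univ.filter (fun i => ¬ P0 F m i (Sum.inl (μ, q)) = none)
          = {loF q, q.1} := by
        ext i
        rw [Finset.mem_filter, Finset.mem_insert, Finset.mem_singleton]
        constructor
        · rintro ⟨-, hne⟩
          by_cases h1 : i.val = q.2.val
          · exact Or.inl (Fin.ext h1)
          · by_cases h2 : i.val = q.1.val
            · exact Or.inr (Fin.ext h2)
            · exact absurd (P0_inl_none h1 h2) hne
        · rintro (rfl | rfl)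
          · refine ⟨mem_univ _, ?_⟩
            rw [P0_inl_eq]
            have hv : (loF q).val = q.2.val := rfl
            split_ifs with h1 h2 <;> simp_all
          · refine ⟨mem_univ _, ?_⟩
            rw [P0_inl_eq]
            split_ifs with h1 h2 <;> simp_all
      rw [hset, Finset.card_insert_of_notMem, Finset.card_singleton]
      rw [Finset.mem_singleton]
      intro hcon
      have hv : q.2.val = q.1.val := congrArg Fin.val hcon
      have hlt := lo_lt_hi q
      omega
    | Sum.inr k =>
      have hk1 : 2 * k.val + 1 < F := by
        have := k.isLt
        omega
      have hset : univ.filter (fun i => ¬ P0 F m i (Sum.inr k) = none)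
          = {(⟨2 * k.val, by omega⟩ : Fin F), ⟨2 * k.val + 1, hk1⟩} := by
        ext i
        rw [Finset.mem_filter, Finset.mem_insert, Finset.mem_singleton]
        constructor
        · rintro ⟨-, hne⟩
          by_cases h1 : i.val = 2 * k.val
          · exact Or.inl (Fin.ext h1)
          · by_cases h2 : i.val = 2 * k.val + 1
            · exact Or.inr (Fin.ext h2)
            · exact absurd (P0_inr_none h1 h2) hne
        · rintro (rfl | rfl)
          · refine ⟨mem_univ _, ?_⟩
            rw [P0_inr_eq]
            have hv : ((⟨2 * k.val, by omega⟩ : Fin F)).val = 2 * k.val := rfl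
            split_ifs with h1 h2 <;> simp_all
          · refine ⟨mem_univ _, ?_⟩
            rw [P0_inr_eq]
            have hv : ((⟨2 * k.val + 1, hk1⟩ : Fin F)).val = 2 * k.val + 1 := rfl
            split_ifs with h1 h2 <;> simp_all
      rw [hset, Finset.card_insert_of_notMem, Finset.card_singleton]
      rw [Finset.mem_singleton]
      intro hcon
      have hv : 2 * k.val = 2 * k.val + 1 := congrArg Fin.val hcon
      omega
  omega

lemma card_Pt_two (F : ℕ) : Fintype.card (Pt F) * 2 = F * (F - 1) := by
  have h1 : Fintype.card (Pt F) = ∑ b : Fin F, b.val := by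
    rw [Fintype.card_sigma]
    simp
  rw [h1, Fin.sum_univ_eq_sum_range (fun i => i) F]
  exact Finset.sum_range_id_mul_two F

lemma construction (F m : ℕ) (hF : 2 ≤ F) :
    ∃ P : Fin F → Fin (m * F * (F - 1) / 2 + F / 2) → Option (Fin (m * F + 2)),
      (∀ (i : Fin F) (j j' : Fin _) (s : Fin _), P i j = some s → P i j' = some s → j = j') ∧
      (∀ (i i' : Fin F) (j : Fin _) (s : Fin _), P i j = some s → P i' j = some s → i = i') ∧
      (∀ (a c : Fin F) (b d : Fin _) (s : Fin _),
        (a, b) ≠ (c, d) → P a b = some s → P c d = some s → P a d = none ∧ P c b = none) ∧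
      (∀ j, (Finset.univ.filter (fun i => P i j = none)).card = F - 2) := by
  classical
  have hcardC : Fintype.card (Ct F m) = m * F * (F - 1) / 2 + F / 2 := by
    have h1 := card_Pt_two F
    obtain ⟨A, hA⟩ : ∃ A, A = F * (F - 1) := ⟨_, rfl⟩
    rw [← hA] at h1
    have hdvd : 2 ∣ A := ⟨Fintype.card (Pt F), by omega⟩
    have hPt : Fintype.card (Pt F) = A / 2 := by omega
    have : Fintype.card (Ct F m) = m * (A / 2) + F / 2 := by
      simp [Ct, Fintype.card_sum, Fintype.card_prod, Fintype.card_fin, hPt]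
    rw [this, ← Nat.mul_div_assoc m hdvd, hA, ← mul_assoc]
  have e : Fin (m * F * (F - 1) / 2 + F / 2) ≃ Ct F m :=
    Fintype.equivOfCardEq (by rw [Fintype.card_fin, hcardC])
  refine ⟨fun i j => P0 F m i (e j), ?_, ?_, ?_, ?_⟩
  · intro i j j' s h h'
    exact e.injective (P0_row h h')
  · intro i i' j s h h'
    exact P0_col h h'
  · intro a c b d s hne hab hcd
    refine P0_cross ?_ hab hcd
    intro hpair
    apply hne
    have h1 : a = c := congrArg Prod.fst hpair
    have h2 : e b = e d := congrArg Prod.snd hpair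
    rw [h1, e.injective h2]
  · intro j
    exact P0_count hF (e j)


end PDACon

theorem pda_optimal_S_eq_mF_add_two (F m : ℕ) (hF : 2 ≤ F) (hm : 1 ≤ m) :
    IsGreatest {K : ℕ | PDAExists K F (F - 2) (m * F + 2)}
      (m * F * (F - 1) / 2 + F / 2) := by
  constructor
  · obtain ⟨P, hP1, hP2, hP3, hP4⟩ := PDACon.construction F m hF
    exact ⟨P, hP1, hP2, hP3, hP4⟩
  · intro K hK
    obtain ⟨P, h1, h2c, h3, h4⟩ := hK
    have hFd2 : ∀ j, (PDAProof.Fd P j).card = 2 := by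
      intro j
      have hs := Finset.card_filter_add_card_filter_not
        (s := (Finset.univ : Finset (Fin F))) (p := fun i => P i j = none)
      rw [Finset.card_univ, Fintype.card_fin, h4 j] at hs
      have he : (PDAProof.Fd P j).card
          = (Finset.univ.filter (fun a => ¬ P a j = none)).card := rfl
      omega
    by_cases hF3 : 3 ≤ F
    · have hmain := PDAProof.upper_main F K (m * F + 2) m hF3 rfl P hFd2 h1 h2c h3
      obtain ⟨A, hA⟩ : ∃ A, A = m * F * (F - 1) := ⟨_, rfl⟩
      have hA2 : A % 2 = 0 := by
        obtain ⟨G, hG⟩ : ∃ G, F = G + 1 := ⟨F - 1, by omega⟩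
        have heven : Even A := by
          rw [hA, hG]
          have h5 : m * (G + 1) * (G + 1 - 1) = m * (G * (G + 1)) := by
            rw [Nat.add_sub_cancel]; ring
          rw [h5]
          exact (Nat.even_mul_succ_self G).mul_left m
        exact Nat.even_iff.mp heven
      rw [← hA] at hmain ⊢
      omega
    · have hF2 : F = 2 := by omega
      subst hF2
      have hup := PDAProof.upper_two K (m * 2 + 2) m (by ring) P hFd2 h1 h2c h3
      omega
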